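/- Let n, K ∈ ℕ with K ≥ 1, Δt > 0 with Δt ≤ 1, ζ ∈ [1/2, 1], let M ∈ ℝ^{n×n} be symmetric positive definite and A ∈ ℝ^{n×n} symmetric positive semidefinite. Let e, ė : {0,…,K} → ℝⁿ and r : {1,…,K} → ℝⁿ satisfy e⁰ = 0, ė⁰ = 0 and, for every k ∈ {1,…,K}, the error scheme equations (1/Δt)·M(ė^k − ė^{k−1}) + A((1−ζ)e^{k−1} + ζe^k) = r^k and (1/Δt)(e^k − e^{k−1}) = (1−ζ)ė^{k−1} + ζė^k. Then (Δt·Σ_{k=1}^{K} (e^k)ᵀAe^k)^{1/2} ≤ 2·(Σ_{k=1}^{K} (Δt·Σ_{k'=1}^{k} ((r^{k'})ᵀM⁻¹r^{k'})^{1/2})²)^{1/2}. -/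

import Mathlib

open Matrix Finset

set_option maxHeartbeats 1000000


lemma quad_sym {n : ℕ} (B : Matrix (Fin n) (Fin n) ℝ) (hB : Bᵀ = B) (u v : Fin n → ℝ) :
    u ⬝ᵥ (B *ᵥ v) = v ⬝ᵥ (B *ᵥ u) := by
  rw [Matrix.dotProduct_mulVec, ← Matrix.mulVec_transpose, hB, dotProduct_comm]

lemma quad_id {n : ℕ} (B : Matrix (Fin n) (Fin n) ℝ) (hB : Bᵀ = B) (ζ : ℝ) (a b : Fin n → ℝ) :
    ((1 - ζ) • a + ζ • b) ⬝ᵥ (B *ᵥ (b - a)) =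
      (1/2) * (b ⬝ᵥ (B *ᵥ b) - a ⬝ᵥ (B *ᵥ a))
        + (ζ - 1/2) * ((b - a) ⬝ᵥ (B *ᵥ (b - a))) := by
  have h := quad_sym B hB a b
  simp only [Matrix.mulVec_sub, Matrix.mulVec_add, Matrix.mulVec_smul,
    dotProduct_sub, dotProduct_add, sub_dotProduct, add_dotProduct,
    smul_dotProduct, dotProduct_smul, smul_eq_mul]
  ring_nf
  nlinarith [h]

lemma cs_inv {n : ℕ} (M : Matrix (Fin n) (Fin n) ℝ) (hM : M.PosDef) (r x : Fin n → ℝ) :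
    r ⬝ᵥ x ≤ Real.sqrt (r ⬝ᵥ (M⁻¹ *ᵥ r)) * Real.sqrt (x ⬝ᵥ (M *ᵥ x)) := by
  have hMsym : Mᵀ = M := by simpa [Matrix.IsSymm] using hM.isHermitian
  have hQM : ∀ y, 0 ≤ y ⬝ᵥ (M *ᵥ y) := fun y => by simpa using hM.posSemidef.dotProduct_mulVec_nonneg y
  have hMinv : M *ᵥ (M⁻¹ *ᵥ r) = r := by
    rw [Matrix.mulVec_mulVec, Matrix.mul_nonsing_inv _ (isUnit_iff_ne_zero.mpr hM.det_pos.ne'),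
      Matrix.one_mulVec]
  set y := M⁻¹ *ᵥ r with hy
  set a := r ⬝ᵥ (M⁻¹ *ᵥ r) with ha
  set b := x ⬝ᵥ (M *ᵥ x) with hb
  set c := r ⬝ᵥ x with hc
  have hya : y ⬝ᵥ (M *ᵥ y) = a := by
    rw [hMinv, ha, dotProduct_comm]
  have hyx : y ⬝ᵥ (M *ᵥ x) = c := by
    rw [quad_sym M hMsym, hMinv, hc, dotProduct_comm]
  have hxy : x ⬝ᵥ (M *ᵥ y) = c := by rw [hMinv, hc, dotProduct_comm]
  have key : ∀ t : ℝ, 0 ≤ b + 2 * t * c + t ^ 2 * a := by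
    intro t
    have h0 := hQM (x + t • y)
    simp only [Matrix.mulVec_add, Matrix.mulVec_smul, dotProduct_add, add_dotProduct,
      smul_dotProduct, dotProduct_smul, smul_eq_mul, hya, hyx, hxy] at h0
    nlinarith [h0]
  have ha0 : 0 ≤ a := by simpa using (hM.inv).posSemidef.dotProduct_mulVec_nonneg r
  have hb0 : 0 ≤ b := hQM x
  rcases eq_or_lt_of_le ha0 with h0 | hpos
  · -- a = 0 ⇒ r = 0
    have hr : r = 0 := by
      by_contra hr
      have hlt : (0:ℝ) < a := by simpa [ha] using hM.inv.dotProduct_mulVec_pos hr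
      rw [← h0] at hlt
      exact lt_irrefl 0 hlt
    have : c = 0 := by simp [hc, hr]
    rw [this]
    positivity
  · have hc2 : c ^ 2 ≤ a * b := by
      have hk := key (-c / a)
      have h1 : b + 2 * (-c / a) * c + (-c / a) ^ 2 * a = b - c ^ 2 / a := by
        field_simp; ring
      rw [h1] at hk
      have := (div_le_iff₀ hpos).mp (by linarith : c ^ 2 / a ≤ b)
      linarith [this]
    calc c ≤ |c| := le_abs_self c
    _ = Real.sqrt (c ^ 2) := (Real.sqrt_sq_eq_abs c).symm
    _ ≤ Real.sqrt (a * b) := Real.sqrt_le_sqrt hc2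
    _ = Real.sqrt a * Real.sqrt b := Real.sqrt_mul ha0 b

/-- A posteriori estimate for the time-discrete `L²`-in-time stiffness-energy
seminorm of the state error for the ζ-scheme (`ζ ∈ [1/2,1]`, `Δt ≤ 1`,
`M` symmetric positive definite, `A` symmetric positive semidefinite),
for trajectories with zero initial error:
`(Δt·Σ_{k=1}^{K} (e^k)ᵀAe^k)^{1/2}
  ≤ 2·(Σ_{k=1}^{K} (Δt·Σ_{k'=1}^{k} ((r^{k'})ᵀM⁻¹r^{k'})^{1/2})²)^{1/2}`. -/
theorem error_scheme_stiffness_seminorm_estimate (n K : ℕ) (hK : 1 ≤ K)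
    (Δt : ℝ) (hΔt : 0 < Δt) (hΔt1 : Δt ≤ 1)
    (ζ : ℝ) (hζ : ζ ∈ Set.Icc (1 / 2 : ℝ) 1)
    (M A : Matrix (Fin n) (Fin n) ℝ) (hM : M.PosDef) (hA : A.PosSemidef)
    (e de r : ℕ → Fin n → ℝ)
    (he0 : e 0 = 0) (hde0 : de 0 = 0)
    (h1 : ∀ k, 1 ≤ k → k ≤ K →
      (1 / Δt) • (M *ᵥ (de k - de (k - 1))) +
        A *ᵥ ((1 - ζ) • e (k - 1) + ζ • e k) = r k)
    (h2 : ∀ k, 1 ≤ k → k ≤ K →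
      (1 / Δt) • (e k - e (k - 1)) = (1 - ζ) • de (k - 1) + ζ • de k) :
    Real.sqrt (Δt * ∑ k ∈ Finset.Icc 1 K, e k ⬝ᵥ (A *ᵥ e k)) ≤
      2 * Real.sqrt (∑ k ∈ Finset.Icc 1 K,
        (Δt * ∑ k' ∈ Finset.Icc 1 k, Real.sqrt (r k' ⬝ᵥ (M⁻¹ *ᵥ r k'))) ^ 2) := by
  obtain ⟨hζ1, hζ2⟩ := hζ
  have hMsym : Mᵀ = M := by simpa [Matrix.IsSymm] using hM.isHermitian
  have hAsym : Aᵀ = A := by simpa [Matrix.IsSymm] using hA.isHermitian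
  have hQM : ∀ y, 0 ≤ y ⬝ᵥ (M *ᵥ y) := fun y => by simpa using hM.posSemidef.dotProduct_mulVec_nonneg y
  have hQA : ∀ y, 0 ≤ y ⬝ᵥ (A *ᵥ y) := fun y => by simpa using hA.dotProduct_mulVec_nonneg y
  set F : ℕ → ℝ := fun k => Real.sqrt (de k ⬝ᵥ (M *ᵥ de k) + e k ⬝ᵥ (A *ᵥ e k)) with hF
  have hFnn : ∀ k, 0 ≤ F k := fun k => Real.sqrt_nonneg _
  have hFsq : ∀ k, F k ^ 2 = de k ⬝ᵥ (M *ᵥ de k) + e k ⬝ᵥ (A *ᵥ e k) := fun k =>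
    Real.sq_sqrt (add_nonneg (hQM _) (hQA _))
  have hF0 : F 0 = 0 := by simp [hF, he0, hde0]
  -- step inequality
  have hstep : ∀ k, 1 ≤ k → k ≤ K →
      F k ≤ F (k - 1) + 2 * Δt * Real.sqrt (r k ⬝ᵥ (M⁻¹ *ᵥ r k)) := by
    intro k hk1 hkK
    have hEq1 := h1 k hk1 hkK
    have hEq2 := h2 k hk1 hkK
    set a := e (k - 1); set b := e k; set u := de (k - 1); set v := de k
    set d : Fin n → ℝ := (1 - ζ) • u + ζ • v with hd
    have hba : b - a = Δt • d := by
      rw [← hEq2, smul_smul, mul_one_div_cancel hΔt.ne', one_smul]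
    -- dot the first equation with d
    have hdot := congrArg (fun w => d ⬝ᵥ w) hEq1
    simp only [dotProduct_add, dotProduct_smul, smul_eq_mul] at hdot
    -- multiply by Δt
    have h3 : d ⬝ᵥ (M *ᵥ (v - u)) + (b - a) ⬝ᵥ (A *ᵥ ((1 - ζ) • a + ζ • b))
        = Δt * (d ⬝ᵥ r k) := by
      have h4 : (b - a) ⬝ᵥ (A *ᵥ ((1 - ζ) • a + ζ • b))
          = Δt * (d ⬝ᵥ (A *ᵥ ((1 - ζ) • a + ζ • b))) := by
        rw [hba, smul_dotProduct, smul_eq_mul]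
      rw [h4]
      have := congrArg (fun t => Δt * t) hdot
      rw [← this]
      field_simp
    -- energy identities
    have hMid : d ⬝ᵥ (M *ᵥ (v - u)) =
        (1/2) * (v ⬝ᵥ (M *ᵥ v) - u ⬝ᵥ (M *ᵥ u))
          + (ζ - 1/2) * ((v - u) ⬝ᵥ (M *ᵥ (v - u))) := quad_id M hMsym ζ u v
    have hAid : (b - a) ⬝ᵥ (A *ᵥ ((1 - ζ) • a + ζ • b)) =
        (1/2) * (b ⬝ᵥ (A *ᵥ b) - a ⬝ᵥ (A *ᵥ a))
          + (ζ - 1/2) * ((b - a) ⬝ᵥ (A *ᵥ (b - a))) := by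
      rw [quad_sym A hAsym, quad_id A hAsym ζ a b]
    rw [hMid, hAid] at h3
    -- bound the right-hand side
    set ρ := Real.sqrt (r k ⬝ᵥ (M⁻¹ *ᵥ r k)) with hρ
    have hρnn : 0 ≤ ρ := Real.sqrt_nonneg _
    have hru : r k ⬝ᵥ u ≤ ρ * F (k - 1) := by
      calc r k ⬝ᵥ u ≤ ρ * Real.sqrt (u ⬝ᵥ (M *ᵥ u)) := cs_inv M hM _ _
      _ ≤ ρ * F (k - 1) := by
          apply mul_le_mul_of_nonneg_left _ hρnn
          exact Real.sqrt_le_sqrt (by linarith [hQA a])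
    have hrv : r k ⬝ᵥ v ≤ ρ * F k := by
      calc r k ⬝ᵥ v ≤ ρ * Real.sqrt (v ⬝ᵥ (M *ᵥ v)) := cs_inv M hM _ _
      _ ≤ ρ * F k := by
          apply mul_le_mul_of_nonneg_left _ hρnn
          exact Real.sqrt_le_sqrt (by linarith [hQA b])
    have hdr : d ⬝ᵥ r k ≤ ρ * (F (k - 1) + F k) := by
      have : d ⬝ᵥ r k = (1 - ζ) * (r k ⬝ᵥ u) + ζ * (r k ⬝ᵥ v) := by
        rw [hd]
        simp only [add_dotProduct, smul_dotProduct, smul_eq_mul, dotProduct_comm u,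
          dotProduct_comm v]
      rw [this]
      have h1ζ : 0 ≤ 1 - ζ := by linarith
      have hζ0 : 0 ≤ ζ := by linarith
      have b1 : (1 - ζ) * (r k ⬝ᵥ u) ≤ (1 - ζ) * (ρ * F (k - 1)) :=
        mul_le_mul_of_nonneg_left hru h1ζ
      have b2 : ζ * (r k ⬝ᵥ v) ≤ ζ * (ρ * F k) := mul_le_mul_of_nonneg_left hrv hζ0
      nlinarith [mul_nonneg hρnn (hFnn (k-1)), mul_nonneg hρnn (hFnn k)]
    -- quadratic inequality
    have hquad : F k ^ 2 ≤ F (k - 1) ^ 2 + 2 * Δt * ρ * (F (k - 1) + F k) := by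
      rw [hFsq, hFsq]
      have hnn1 := hQM (v - u)
      have hnn2 := hQA (b - a)
      have hζ12 : (0:ℝ) ≤ ζ - 1/2 := by linarith
      nlinarith [mul_nonneg hζ12 hnn1, mul_nonneg hζ12 hnn2, mul_le_mul_of_nonneg_left hdr hΔt.le]
    -- conclude F k ≤ F (k-1) + 2Δtρ
    set X := F k; set Y := F (k - 1); set R := 2 * Δt * ρ
    have hRnn : 0 ≤ R := by positivity
    have hXnn : 0 ≤ X := hFnn k
    have hYnn : 0 ≤ Y := hFnn (k - 1)
    rcases eq_or_lt_of_le (add_nonneg hXnn hYnn) with h0 | hpos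
    · have hX0 : X = 0 := by linarith
      rw [hX0]; positivity
    · have hfac : (X - Y - R) * (X + Y) ≤ 0 := by nlinarith [hquad]
      nlinarith [hfac, hpos]
  -- cumulative bound
  have hFbound : ∀ k, k ≤ K →
      F k ≤ 2 * (Δt * ∑ k' ∈ Finset.Icc 1 k, Real.sqrt (r k' ⬝ᵥ (M⁻¹ *ᵥ r k'))) := by
    intro k
    induction k with
    | zero => intro _; simp [hF0]
    | succ m ih =>
      intro hm
      have hs := hstep (m + 1) (Nat.le_add_left 1 m) hm
      have hm' : m ≤ K := le_trans (Nat.le_succ m) hm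
      have ihm := ih hm'
      rw [Finset.sum_Icc_succ_top (Nat.succ_le_succ (Nat.zero_le m))]
      simp only [Nat.add_sub_cancel] at hs
      have := Real.sqrt_nonneg (r (m+1) ⬝ᵥ (M⁻¹ *ᵥ r (m+1)))
      nlinarith [hs, ihm]
  -- termwise bound
  have hterm : ∀ k ∈ Finset.Icc 1 K, e k ⬝ᵥ (A *ᵥ e k) ≤
      4 * (Δt * ∑ k' ∈ Finset.Icc 1 k, Real.sqrt (r k' ⬝ᵥ (M⁻¹ *ᵥ r k'))) ^ 2 := by
    intro k hk
    have hb := hFbound k (Finset.mem_Icc.mp hk).2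
    have h5 : e k ⬝ᵥ (A *ᵥ e k) ≤ F k ^ 2 := by rw [hFsq k]; linarith [hQM (de k)]
    have h6 : F k ^ 2 ≤ (2 * (Δt * ∑ k' ∈ Finset.Icc 1 k,
        Real.sqrt (r k' ⬝ᵥ (M⁻¹ *ᵥ r k')))) ^ 2 := pow_le_pow_left₀ (hFnn k) hb 2
    nlinarith [h5, h6]
  -- sum up
  set S := ∑ k ∈ Finset.Icc 1 K,
      (Δt * ∑ k' ∈ Finset.Icc 1 k, Real.sqrt (r k' ⬝ᵥ (M⁻¹ *ᵥ r k'))) ^ 2 with hS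
  have hSnn : 0 ≤ S := Finset.sum_nonneg fun k _ => sq_nonneg _
  have hsum : Δt * ∑ k ∈ Finset.Icc 1 K, e k ⬝ᵥ (A *ᵥ e k) ≤ 4 * S := by
    have h7 : ∑ k ∈ Finset.Icc 1 K, e k ⬝ᵥ (A *ᵥ e k) ≤ 4 * S := by
      rw [hS, Finset.mul_sum]
      exact Finset.sum_le_sum hterm
    have h8 : 0 ≤ ∑ k ∈ Finset.Icc 1 K, e k ⬝ᵥ (A *ᵥ e k) :=
      Finset.sum_nonneg fun k _ => hQA _
    nlinarith [h7, h8]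
  calc Real.sqrt (Δt * ∑ k ∈ Finset.Icc 1 K, e k ⬝ᵥ (A *ᵥ e k))
      ≤ Real.sqrt (4 * S) := Real.sqrt_le_sqrt hsum
    _ = 2 * Real.sqrt S := by
        rw [show (4:ℝ) = 2 ^ 2 by norm_num, Real.sqrt_mul (by positivity), Real.sqrt_sq (by norm_num : (0:ℝ) ≤ 2)]
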